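/- Let n ≥ 1 and let G = {ε ∈ {±1}^n : ∏ᵢ εᵢ = 1} act on ℝ^n by coordinatewise multiplication, (ε · x)ᵢ = εᵢ xᵢ. Then the orbit space ℝ^n / G, with the quotient topology, is homeomorphic to ℝ^n. -/

import Mathlib

open Finset

namespace C1Aux




noncomputable def phi (m : ℕ) (x : Fin (m+1) → ℝ) : Fin (m+1) → ℝ :=
  fun i => if i = Fin.last m then ∏ j, x j else x i ^ 2 - x (Fin.last m) ^ 2

-- helper: one sided
lemma sq_eq_of_le (m : ℕ) (x y : Fin (m+1) → ℝ)
    (hdiff : ∀ i, x i ^ 2 - x (Fin.last m) ^ 2 = y i ^ 2 - y (Fin.last m) ^ 2)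
    (hprod : ∏ i, x i = ∏ i, y i)
    (hle : x (Fin.last m) ^ 2 ≤ y (Fin.last m) ^ 2) :
    ∀ i, x i ^ 2 = y i ^ 2 := by
  rcases eq_or_lt_of_le hle with heq | hlt
  · intro i; have := hdiff i; linarith
  · exfalso
    have hstrict : ∀ i, x i ^ 2 < y i ^ 2 := fun i => by have := hdiff i; linarith
    have hprodsq : ∏ i, x i ^ 2 = ∏ i, y i ^ 2 := by
      rw [Finset.prod_pow, Finset.prod_pow, hprod]
    have hypos : ∀ i, 0 < y i ^ 2 := fun i => lt_of_le_of_lt (sq_nonneg _) (hstrict i)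
    have hyprodpos : 0 < ∏ i, y i ^ 2 := Finset.prod_pos fun i _ => hypos i
    have hxne : ∀ i, x i ^ 2 ≠ 0 := by
      have : ∏ i, x i ^ 2 ≠ 0 := by rw [hprodsq]; exact ne_of_gt hyprodpos
      intro i hi
      exact this (Finset.prod_eq_zero (Finset.mem_univ i) hi)
    have hxpos : ∀ i, 0 < x i ^ 2 := fun i => lt_of_le_of_ne (sq_nonneg _) (Ne.symm (hxne i))
    have : ∏ i, x i ^ 2 < ∏ i, y i ^ 2 :=
      Finset.prod_lt_prod_of_nonempty (fun i _ => hxpos i) (fun i _ => hstrict i)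
        Finset.univ_nonempty
    linarith [hprodsq]

lemma sq_eq (m : ℕ) (x y : Fin (m+1) → ℝ) (h : phi m x = phi m y) :
    (∀ i, x i ^ 2 = y i ^ 2) ∧ ∏ i, x i = ∏ i, y i := by
  have hprod : ∏ i, x i = ∏ i, y i := by
    have := congrFun h (Fin.last m); simpa [phi] using this
  have hdiff : ∀ i, x i ^ 2 - x (Fin.last m) ^ 2 = y i ^ 2 - y (Fin.last m) ^ 2 := by
    intro i
    by_cases hi : i = Fin.last m
    · subst hi; ring
    · have := congrFun h i; simpa [phi, hi] using this
  rcases le_total (x (Fin.last m) ^ 2) (y (Fin.last m) ^ 2) with hle | hle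
  · exact ⟨sq_eq_of_le m x y hdiff hprod hle, hprod⟩
  · have := sq_eq_of_le m y x (fun i => (hdiff i).symm) hprod.symm hle
    exact ⟨fun i => (this i).symm, hprod⟩


lemma pm_one (a b : ℝ) (h : a ^ 2 = b ^ 2) (ha : a ≠ 0) :
    b / a = 1 ∨ b / a = -1 := by
  have : (b - a) * (b + a) = 0 := by nlinarith
  rcases mul_eq_zero.mp this with h1 | h1
  · left; field_simp; linarith
  · right; field_simp; linarith

lemma key_signs (m : ℕ) (x y : Fin (m+1) → ℝ)
    (hsq : ∀ i, x i ^ 2 = y i ^ 2) (hprod : ∏ i, x i = ∏ i, y i) :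
    ∃ ε : Fin (m+1) → ℝ, (∀ i, ε i = 1 ∨ ε i = -1) ∧ (∏ i, ε i) = 1 ∧
      ∀ i, y i = ε i * x i := by
  classical
  by_cases hz : ∀ i, x i ≠ 0
  · refine ⟨fun i => y i / x i, fun i => pm_one _ _ (hsq i) (hz i), ?_, ?_⟩
    · rw [Finset.prod_div_distrib, ← hprod]
      exact div_self (Finset.prod_ne_zero_iff.mpr fun i _ => hz i)
    · intro i; exact (div_mul_cancel₀ _ (hz i)).symm
  · push_neg at hz
    obtain ⟨j, hj⟩ := hz
    set ε₀ : Fin (m+1) → ℝ := fun i => if x i = 0 then 1 else y i / x i with hε₀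
    have hpm : ∀ i, ε₀ i = 1 ∨ ε₀ i = -1 := by
      intro i
      by_cases hi : x i = 0
      · left; simp [hε₀, hi]
      · simpa [hε₀, hi] using pm_one _ _ (hsq i) hi
    have hy0 : ∀ i, x i = 0 → y i = 0 := by
      intro i hi
      have : y i ^ 2 = 0 := by rw [← hsq i, hi]; ring
      exact pow_eq_zero_iff (by norm_num) |>.mp this
    have hmul : ∀ i, y i = ε₀ i * x i := by
      intro i
      by_cases hi : x i = 0
      · simp [hi, hy0 i hi]
      · simp only [hε₀, hi, if_false]; field_simp
    set P := ∏ i, ε₀ i with hP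
    have hPpm : P = 1 ∨ P = -1 := by
      rw [hP]
      refine Finset.prod_induction ε₀ (fun z => z = 1 ∨ z = -1) ?_ (Or.inl rfl)
        (fun i _ => hpm i)
      rintro a b (rfl | rfl) (rfl | rfl) <;> norm_num
    refine ⟨Function.update ε₀ j (P * ε₀ j), ?_, ?_, ?_⟩
    · intro i
      by_cases hi : i = j
      · subst hi
        rw [Function.update_self]
        rcases hPpm with h1 | h1 <;> rcases hpm i with h2 | h2 <;>
          simp [h1, h2]
      · rw [Function.update_of_ne hi]; exact hpm i
    · rw [Finset.prod_update_of_mem (Finset.mem_univ j)]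
      have herase : ε₀ j * ∏ i ∈ Finset.univ \ {j}, ε₀ i = P := by
        rw [hP, ← Finset.erase_eq, Finset.mul_prod_erase _ _ (Finset.mem_univ j)]
      have hP2 : P * P = 1 := by rcases hPpm with h1 | h1 <;> simp [h1]
      calc P * ε₀ j * ∏ i ∈ Finset.univ \ {j}, ε₀ i
          = P * (ε₀ j * ∏ i ∈ Finset.univ \ {j}, ε₀ i) := by ring
        _ = P * P := by rw [herase]
        _ = 1 := hP2
    · intro i
      by_cases hi : i = j
      · subst hi; rw [Function.update_self, hj, hy0 _ hj]; ring
      · rw [Function.update_of_ne hi]; exact hmul i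



lemma phi_surjective (m : ℕ) : Function.Surjective (phi m) := by
  classical
  intro z
  set ℓ := Fin.last m with hℓ
  set c : Fin (m+1) → ℝ := fun i => if i = ℓ then 0 else z i with hc
  set q := z ℓ with hq
  -- t₀ : max of -c
  obtain ⟨t₀, ht₀mem, ht₀⟩ : ∃ t₀, (∃ j, t₀ = -c j) ∧ ∀ i, -c i ≤ t₀ := by
    obtain ⟨j, _, hj⟩ := Finset.exists_mem_eq_sup' (Finset.univ_nonempty (α := Fin (m+1)))
      (fun i => -c i)
    exact ⟨_, ⟨j, hj⟩, fun i => Finset.le_sup' (fun i => -c i) (Finset.mem_univ i)⟩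
  have ht₀0 : 0 ≤ t₀ := by
    have := ht₀ ℓ
    simp [hc] at this
    exact this
  have hcnn : ∀ i, 0 ≤ t₀ + c i := fun i => by linarith [ht₀ i]
  set f : ℝ → ℝ := fun t => ∏ i, (t + c i) with hf
  have hf0 : f t₀ = 0 := by
    obtain ⟨j, hj⟩ := ht₀mem
    exact Finset.prod_eq_zero (Finset.mem_univ j) (by rw [hj]; ring)
  set M := t₀ + q ^ 2 + 1 with hM
  have hfM : q ^ 2 ≤ f M := by
    have h1 : (q ^ 2 + 1) ^ (m + 1) ≤ f M := by
      rw [hf]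
      calc (q ^ 2 + 1) ^ (m + 1) = ∏ _i : Fin (m+1), (q ^ 2 + 1) := by
            rw [Finset.prod_const]; simp
        _ ≤ ∏ i, (M + c i) := by
            apply Finset.prod_le_prod
            · intro i _; positivity
            · intro i _; have := hcnn i; rw [hM]; linarith
    have h2 : q ^ 2 + 1 ≤ (q ^ 2 + 1) ^ (m + 1) := by
      apply le_self_pow₀ (by nlinarith [sq_nonneg q]) (by omega)
    linarith
  have hcont : ContinuousOn f (Set.Icc t₀ M) := by
    apply Continuous.continuousOn
    apply continuous_finset_prod
    intro i _
    fun_prop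
  have hmem : q ^ 2 ∈ Set.Icc (f t₀) (f M) := by
    constructor
    · rw [hf0]; positivity
    · exact hfM
  have hle : t₀ ≤ M := by nlinarith [sq_nonneg q]
  obtain ⟨t, htmem, hft⟩ := intermediate_value_Icc hle hcont hmem
  have htt₀ : t₀ ≤ t := htmem.1
  have htnn : ∀ i, 0 ≤ t + c i := fun i => by linarith [ht₀ i]
  have ht0 : 0 ≤ t := by linarith
  set σ : ℝ := if q < 0 then -1 else 1 with hσ
  set x : Fin (m+1) → ℝ := fun i => if i = ℓ then σ * Real.sqrt t else Real.sqrt (t + c i)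
    with hx
  have hxsq : ∀ i, x i ^ 2 = t + c i := by
    intro i
    by_cases hi : i = ℓ
    · subst hi
      have hσ2 : σ ^ 2 = 1 := by rw [hσ]; split <;> norm_num
      simp only [hx, if_pos rfl, mul_pow, hσ2, one_mul, Real.sq_sqrt ht0, hc, if_pos rfl]
      ring
    · simp only [hx, if_neg hi, Real.sq_sqrt (htnn i)]
  have hprodsq : (∏ i, x i) ^ 2 = q ^ 2 := by
    rw [← Finset.prod_pow]
    rw [Finset.prod_congr rfl (fun i _ => hxsq i)]
    exact hft
  have hprodx : ∏ i, x i = q := by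
    have hcase : ∏ i, x i = q ∨ ∏ i, x i = -q := by
      have : (∏ i, x i - q) * (∏ i, x i + q) = 0 := by nlinarith [hprodsq]
      rcases mul_eq_zero.mp this with h | h
      · left; linarith
      · right; linarith
    have hsign : ∏ i, x i = σ * (Real.sqrt t * ∏ i ∈ Finset.univ \ {ℓ}, x i) := by
      rw [← Finset.mul_prod_erase _ _ (Finset.mem_univ ℓ), Finset.erase_eq]
      simp only [hx, if_pos rfl]
      ring
    have hrest : 0 ≤ Real.sqrt t * ∏ i ∈ Finset.univ \ {ℓ}, x i := by
      apply mul_nonneg (Real.sqrt_nonneg _)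
      apply Finset.prod_nonneg
      intro i hi
      have hine : i ≠ ℓ := by
        simp [Finset.mem_sdiff] at hi; exact hi
      simp only [hx, if_neg hine]
      exact Real.sqrt_nonneg _
    rcases hcase with h | h
    · exact h
    · by_cases hqneg : q < 0
      · exfalso
        have : σ = -1 := by rw [hσ]; simp [hqneg]
        rw [this] at hsign
        nlinarith
      · push_neg at hqneg
        have : σ = 1 := by rw [hσ]; simp [not_lt.mpr hqneg]
        rw [this, one_mul] at hsign
        have : ∏ i, x i ≥ 0 := by rw [hsign]; exact hrest
        have hq0 : q = 0 := by nlinarith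
        rw [h, hq0]; ring
  refine ⟨x, ?_⟩
  funext i
  by_cases hi : i = ℓ
  · subst hi
    simp [phi, hprodx, hq, hℓ]
  · simp only [phi, ← hℓ, if_neg hi]
    rw [hxsq i, hxsq ℓ]
    simp [hc, if_neg hi]


lemma phi_continuous (m : ℕ) : Continuous (phi m) := by
  apply continuous_pi
  intro i
  unfold phi
  split
  · exact continuous_finset_prod _ fun j _ => continuous_apply j
  · fun_prop

lemma phi_bound (m : ℕ) (C : ℝ) (hC : 0 ≤ C) (x : Fin (m+1) → ℝ)
    (h : ∀ i, |phi m x i| ≤ C) : ∀ i, |x i| ≤ C + 1 := by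
  set ℓ := Fin.last m with hℓ
  have hdiff : ∀ i, |x i ^ 2 - x ℓ ^ 2| ≤ C := by
    intro i
    by_cases hi : i = ℓ
    · subst hi; simpa using hC
    · have := h i; simpa [phi, hi, hℓ, show i ≠ Fin.last m from hi] using this
  have hprod : |∏ i, x i| ≤ C := by
    have := h ℓ; simpa [phi, hℓ] using this
  have hl : x ℓ ^ 2 ≤ C ^ 2 + C + 1 := by
    by_contra hcon
    push_neg at hcon
    have hfac : ∀ i, C ^ 2 + 1 ≤ x i ^ 2 := by
      intro i
      have := abs_le.mp (hdiff i)
      linarith [this.1, this.2]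
    have h1 : (C ^ 2 + 1) ^ (m + 1) ≤ ∏ i, x i ^ 2 := by
      calc (C ^ 2 + 1) ^ (m + 1) = ∏ _i : Fin (m+1), (C ^ 2 + 1) := by
            rw [Finset.prod_const]; simp
        _ ≤ ∏ i, x i ^ 2 := Finset.prod_le_prod (fun i _ => by positivity)
            (fun i _ => hfac i)
    have h2 : C ^ 2 + 1 ≤ (C ^ 2 + 1) ^ (m + 1) := le_self_pow₀ (by nlinarith [sq_nonneg C]) (by omega)
    have h3 : ∏ i, x i ^ 2 = (∏ i, x i) ^ 2 := by rw [Finset.prod_pow]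
    have h4 : (∏ i, x i) ^ 2 ≤ C ^ 2 := by
      have := abs_le.mp hprod
      nlinarith [this.1, this.2]
    linarith
  intro i
  have := abs_le.mp (hdiff i)
  have hx2 : x i ^ 2 ≤ C ^ 2 + 2 * C + 1 := by linarith [this.1, this.2]
  have : x i ^ 2 ≤ (C + 1) ^ 2 := by nlinarith
  have habs : |x i| ^ 2 ≤ (C + 1) ^ 2 := by rwa [sq_abs]
  nlinarith [abs_nonneg (x i)]

lemma phi_proper (m : ℕ) : IsProperMap (phi m) := by
  rw [isProperMap_iff_isCompact_preimage]
  refine ⟨phi_continuous m, fun K hK => ?_⟩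
  obtain ⟨C, hC⟩ := hK.isBounded.subset_closedBall 0
  have hC0 : 0 ≤ max C 0 := le_max_right _ _
  have hsub : phi m ⁻¹' K ⊆ Metric.closedBall 0 (max C 0 + 1) := by
    intro x hx
    have hxK : phi m x ∈ Metric.closedBall 0 C := hC hx
    have hnorm : ‖phi m x‖ ≤ max C 0 := by
      rw [← dist_zero_right] at *
      exact le_trans (Metric.mem_closedBall.mp hxK) (le_max_left _ _)
    have hcomp : ∀ i, |phi m x i| ≤ max C 0 := by
      intro i
      calc |phi m x i| = ‖phi m x i‖ := rfl
        _ ≤ ‖phi m x‖ := norm_le_pi_norm _ i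
        _ ≤ max C 0 := hnorm
    have := phi_bound m (max C 0) hC0 x hcomp
    rw [Metric.mem_closedBall, dist_zero_right]
    rw [pi_norm_le_iff_of_nonneg (by linarith)]
    intro i
    exact this i
  exact (isCompact_closedBall _ _).of_isClosed_subset
    (hK.isClosed.preimage (phi_continuous m)) hsub


lemma phi_invariant (m : ℕ) (x y : Fin (m+1) → ℝ)
    (h : ∃ ε : Fin (m+1) → ℝ, (∀ i, ε i = 1 ∨ ε i = -1) ∧ (∏ i, ε i) = 1 ∧
      ∀ i, y i = ε i * x i) :
    (fun i => if i = Fin.last m then ∏ j, x j else x i ^ 2 - x (Fin.last m) ^ 2)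
    = (fun i => if i = Fin.last m then ∏ j, y j else y i ^ 2 - y (Fin.last m) ^ 2) := by
  obtain ⟨ε, hpm, hp1, hmul⟩ := h
  have hsq : ∀ i, y i ^ 2 = x i ^ 2 := by
    intro i
    rw [hmul i, mul_pow]
    rcases hpm i with h | h <;> rw [h] <;> ring
  have hprod : ∏ i, y i = ∏ i, x i := by
    calc ∏ i, y i = ∏ i, (ε i * x i) := Finset.prod_congr rfl fun i _ => hmul i
      _ = (∏ i, ε i) * ∏ i, x i := Finset.prod_mul_distrib
      _ = ∏ i, x i := by rw [hp1, one_mul]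
  funext i
  by_cases hi : i = Fin.last m
  · simp [hi, hprod]
  · simp [hi, hsq]
end C1Aux


/-- The orbit space of the standard complexity one action of
`G = {ε ∈ {±1}^n : ∏ εᵢ = 1}` on `ℝ^n` (by coordinatewise multiplication),
with the quotient topology, is homeomorphic to `ℝ^n`. -/
theorem orbit_space_standard_complexity_one_homeo_euclidean
    (n : ℕ) (hn : 1 ≤ n) :
    Nonempty ((Quot fun x y : Fin n → ℝ =>
        ∃ ε : Fin n → ℝ, (∀ i, ε i = 1 ∨ ε i = -1) ∧ (∏ i, ε i) = 1 ∧
          ∀ i, y i = ε i * x i) ≃ₜ (Fin n → ℝ)) := by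
  obtain ⟨m, rfl⟩ : ∃ m, n = m + 1 := ⟨n - 1, by omega⟩
  set r : (Fin (m+1) → ℝ) → (Fin (m+1) → ℝ) → Prop := fun x y =>
    ∃ ε : Fin (m+1) → ℝ, (∀ i, ε i = 1 ∨ ε i = -1) ∧ (∏ i, ε i) = 1 ∧
      ∀ i, y i = ε i * x i with hr
  have hinv : ∀ x y, r x y → C1Aux.phi m x = C1Aux.phi m y := by
    intro x y hxy
    exact C1Aux.phi_invariant m x y hxy
  have hkey : ∀ x y, C1Aux.phi m x = C1Aux.phi m y → r x y := by
    intro x y h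
    obtain ⟨hsq, hprod⟩ := C1Aux.sq_eq m x y h
    exact C1Aux.key_signs m x y hsq hprod
  let F : Quot r → (Fin (m+1) → ℝ) := Quot.lift (C1Aux.phi m) hinv
  have hsurj : Function.Surjective F := by
    intro z
    obtain ⟨x, hx⟩ := C1Aux.phi_surjective m z
    exact ⟨Quot.mk r x, hx⟩
  have hinj : Function.Injective F := by
    intro a b
    induction a using Quot.ind with | _ x =>
    induction b using Quot.ind with | _ y =>
    intro h
    exact Quot.sound (hkey x y h)
  let e : Quot r ≃ (Fin (m+1) → ℝ) := Equiv.ofBijective F ⟨hinj, hsurj⟩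
  refine ⟨{ toEquiv := e, continuous_toFun := ?_, continuous_invFun := ?_ }⟩
  · exact continuous_quot_lift hinv (C1Aux.phi_continuous m)
  · rw [continuous_iff_isClosed]
    intro s hs
    show IsClosed (⇑e.symm ⁻¹' s)
    have h1 : ⇑e.symm ⁻¹' s = ⇑e '' s := (Equiv.image_eq_preimage_symm e s).symm
    have h2 : e '' s = C1Aux.phi m '' (Quot.mk r ⁻¹' s) := by
      conv_lhs => rw [← Set.image_preimage_eq s (Quot.mk_surjective)]
      rw [Set.image_image]
      rfl
    rw [h1, h2]
    exact (C1Aux.phi_proper m).isClosedMap _ (hs.preimage continuous_quot_mk)
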